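/- Let b : [0,∞) → (0,∞) be continuous and suppose the solution w of w'' + b(r)·w = 0, w(0) = 0, w'(0) = 1 is monotone increasing and bounded on [0,∞). Then liminf_{r→∞} b(r) = 0. -/

import Mathlib

open Real Set Filter

/-- If `b : [0,∞) → (0,∞)` is continuous and the solution `w` of
`w'' + b w = 0`, `w 0 = 0`, `w' 0 = 1` is monotone increasing and bounded on `[0,∞)`,
then `liminf_{r→∞} b r = 0`. -/
theorem stmt_6 (b w : ℝ → ℝ)
    (hb_cont : ContinuousOn b (Set.Ici 0))
    (hb_pos : ∀ r : ℝ, 0 ≤ r → 0 < b r)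
    (hw : ContDiff ℝ 2 w)
    (hode : ∀ r : ℝ, 0 ≤ r → deriv (deriv w) r + b r * w r = 0)
    (h0 : w 0 = 0) (h0' : deriv w 0 = 1)
    (hmono : MonotoneOn w (Set.Ici 0))
    (hbdd : BddAbove (w '' Set.Ici 0)) :
    Filter.liminf b Filter.atTop = 0 := by
  -- Basic smoothness facts
  have hw2 : ContDiff ℝ (1 + 1) w := by
    rw [one_add_one_eq_two]; exact_mod_cast hw
  rw [contDiff_succ_iff_deriv] at hw2
  have hwdiff : Differentiable ℝ w := hw2.1
  have hw1 : ContDiff ℝ 1 (deriv w) := hw2.2.2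
  rw [contDiff_one_iff_deriv] at hw1
  have hw'diff : Differentiable ℝ (deriv w) := hw1.1
  have hw''cont : Continuous (deriv (deriv w)) := hw1.2
  -- Step A : deriv w is nonnegative on [0, ∞)
  have hderiv_nonneg : ∀ r : ℝ, 0 ≤ r → 0 ≤ deriv w r := by
    intro r hr
    have hd : HasDerivWithinAt w (deriv w r) (Ioi r) r :=
      (hwdiff r).hasDerivAt.hasDerivWithinAt
    rw [hasDerivWithinAt_iff_tendsto_slope] at hd
    have hsub : Ioi r \ {r} = Ioi r := diff_singleton_eq_self (by simp)
    rw [hsub] at hd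
    refine ge_of_tendsto hd ?_
    filter_upwards [self_mem_nhdsWithin] with s hs
    have hs' : r < s := hs
    have : w r ≤ w s := hmono hr (le_trans hr hs'.le) hs'.le
    have hpos : 0 < s - r := by linarith
    rw [slope_def_field]
    exact div_nonneg (sub_nonneg.mpr this) hpos.le
  -- Step B : ∃ a > 0 with w a > 0
  obtain ⟨a, ha0, hwa⟩ : ∃ a : ℝ, 0 < a ∧ 0 < w a := by
    have hcont' : ContinuousAt (deriv w) 0 := hw'diff.continuous.continuousAt
    have : ∀ᶠ x in nhds (0 : ℝ), 0 < deriv w x := by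
      have := (continuousAt_const (y := (0:ℝ))).eventually_lt hcont' (by rw [h0']; norm_num)
      filter_upwards [this] with x hx using hx
    obtain ⟨δ, hδpos, hδ⟩ := Metric.eventually_nhds_iff_ball.mp this
    have hsm : StrictMonoOn w (Icc 0 (δ/2)) := by
      apply strictMonoOn_of_deriv_pos (convex_Icc _ _) (hwdiff.continuous.continuousOn)
      intro x hx
      rw [interior_Icc] at hx
      apply hδ
      rw [Metric.mem_ball, Real.dist_eq, sub_zero, abs_of_nonneg hx.1.le]
      linarith [hx.2]
    refine ⟨δ/2, by linarith, ?_⟩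
    have := hsm (mem_Icc.mpr ⟨le_rfl, by linarith⟩) (mem_Icc.mpr ⟨by linarith, le_rfl⟩)
      (by linarith)
    rwa [h0] at this
  -- Step C : ∀ ε > 0, ∀ R, ∃ r ≥ R, b r ≤ ε
  have key : ∀ ε : ℝ, 0 < ε → ∀ R : ℝ, ∃ r, R ≤ r ∧ b r ≤ ε := by
    intro ε hε R
    by_contra hcon
    push_neg at hcon
    set R' : ℝ := max R a with hR'
    have hR'a : a ≤ R' := le_max_right _ _
    have hR'pos : 0 < R' := lt_of_lt_of_le ha0 hR'a
    have hc := hwa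
    -- on [R', ∞), w x ≥ w a > 0 and b x > ε
    have hwge : ∀ x : ℝ, R' ≤ x → w a ≤ w x := fun x hx =>
      hmono (le_of_lt ha0) (le_trans hR'pos.le hx) (le_trans hR'a hx)
    -- g x = deriv w x + ε * w a * x is antitone on Ici R'
    have hanti : AntitoneOn (fun x => deriv w x + ε * w a * x) (Ici R') := by
      apply antitoneOn_of_deriv_nonpos (convex_Ici _)
      · exact ((hw'diff.continuous.add (by continuity)).continuousOn)
      · exact (hw'diff.add ((differentiable_id.const_mul _))).differentiableOn
      · intro x hx
        rw [interior_Ici] at hx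
        have hx0 : (0:ℝ) ≤ x := le_trans hR'pos.le hx.le
        have hD : HasDerivAt (fun x => deriv w x + ε * w a * x)
            (deriv (deriv w) x + ε * w a) x := by
          have h := (hw'diff x).hasDerivAt.add ((hasDerivAt_id x).const_mul (ε * w a))
          rw [mul_one] at h; exact h
        rw [hD.deriv]
        have hode' := hode x hx0
        have hbx : ε ≤ b x := (hcon x (le_trans (le_max_left _ _) hx.le)).le
        have hwx : w a ≤ w x := hwge x hx.le
        have : ε * w a ≤ b x * w x :=
          mul_le_mul hbx hwx hwa.le (le_trans hε.le hbx)
        linarith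
    -- evaluate at r := R' + (deriv w R' + 1) / (ε * w a)
    obtain ⟨r, hr⟩ : ∃ r : ℝ, r = R' + (deriv w R' + 1) / (ε * w a) := ⟨_, rfl⟩
    have hεc : 0 < ε * w a := mul_pos hε hwa
    have hq : 0 ≤ (deriv w R' + 1) / (ε * w a) :=
      div_nonneg (by linarith [hderiv_nonneg R' hR'pos.le]) hεc.le
    have hrR' : R' ≤ r := by rw [hr]; linarith
    have h1 := hanti (self_mem_Ici) hrR' hrR'
    simp only at h1
    have h2 : ε * w a * r = ε * w a * R' + (deriv w R' + 1) := by
      rw [hr]; field_simp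
    have h3 : deriv w r ≤ -1 := by linarith
    linarith [hderiv_nonneg r (le_trans hR'pos.le hrR')]
  -- Step D : conclude
  have hfreq : ∀ ε : ℝ, 0 < ε → ∃ᶠ x in atTop, b x ≤ ε := by
    intro ε hε
    rw [frequently_atTop]
    intro R
    obtain ⟨r, hr1, hr2⟩ := key ε hε R
    exact ⟨r, hr1, hr2⟩
  have hbdd_below : IsBoundedUnder (· ≥ ·) atTop b := by
    refine ⟨0, ?_⟩
    simp only [eventually_map]
    filter_upwards [eventually_ge_atTop (0:ℝ)] with x hx
    exact (hb_pos x hx).le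
  have hle : liminf b atTop ≤ 0 := by
    refine le_of_forall_pos_le_add fun ε hε => ?_
    have := liminf_le_of_frequently_le (hfreq ε hε) hbdd_below
    linarith
  have hge : 0 ≤ liminf b atTop := by
    apply le_liminf_of_le
    · exact IsCoboundedUnder.of_frequently_le (hfreq 1 one_pos)
    · filter_upwards [eventually_ge_atTop (0:ℝ)] with x hx
      exact (hb_pos x hx).le
  linarith
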